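/- Let M be an invertible n×n matrix over a field and fix 1 ≤ r < n. Let T be the n×n matrix whose j-th column, for 1 ≤ j ≤ r, is the (n−r+j)-th column of M⁻¹, and whose j-th column, for r+1 ≤ j ≤ n, is the standard basis vector e_j. Then det(T) equals the determinant of the r×r submatrix of M⁻¹ with rows 1,…,r and columns n−r+1,…,n, and det(MT) = (−1)^{r(n+1)} times the determinant of the (n−r)×(n−r) submatrix of M in rows 1,…,n−r and columns r+1,…,n. -/

import Mathlib

open Matrix Equiv
open Fin.NatCast Fin.CommRing

theorem finRotate_pow_apply_aux {m : ℕ} (r : ℕ) (x : Fin (m + 1)) :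
    ((finRotate (m + 1)) ^ r) x = x + (r : Fin (m + 1)) := by
  induction r with
  | zero => simp
  | succ r ih =>
      rw [pow_succ', Equiv.Perm.mul_apply, ih, finRotate_succ_apply]
      push_cast
      ring

/-- The key construction in the proof of the Jacobi complementary minor theorem:
for the matrix `T` whose first `r` columns are the last `r` columns of `M⁻¹` and whose
remaining columns are standard basis vectors, `det T` is the corresponding minor of
`M⁻¹`, and `det (M T) = (−1)^{r(n+1)}` times the complementary minor of `M`. -/
theorem jacobi_key_construction {k : Type*} [Field k] {n r : ℕ}
    (hr1 : 1 ≤ r) (hrn : r < n)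
    (M : Matrix (Fin n) (Fin n) k) (hM : IsUnit M.det)
    (T : Matrix (Fin n) (Fin n) k)
    (hT : ∀ i j : Fin n, T i j =
      if h : (j : ℕ) < r then M⁻¹ i ⟨n - r + (j : ℕ), by omega⟩
      else if i = j then 1 else 0) :
    T.det = ((M⁻¹).submatrix
        (fun i : Fin r => (⟨(i : ℕ), by have := i.isLt; omega⟩ : Fin n))
        (fun j : Fin r => (⟨n - r + (j : ℕ), by have := j.isLt; omega⟩ : Fin n))).det ∧
      (M * T).det = (-1 : k) ^ (r * (n + 1)) *
        (M.submatrix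
          (fun i : Fin (n - r) => (⟨(i : ℕ), by have := i.isLt; omega⟩ : Fin n))
          (fun j : Fin (n - r) => (⟨r + (j : ℕ), by have := j.isLt; omega⟩ : Fin n))).det := by
  have hrnr : r + (n - r) = n := by omega
  have hn : n - r + r = n := by omega
  have hMinv : M * M⁻¹ = 1 := Matrix.mul_nonsing_inv M hM
  constructor
  · -- Part 1
    let e : Fin r ⊕ Fin (n - r) ≃ Fin n := finSumFinEquiv.trans (finCongr hrnr)
    have h1 : T.submatrix e e = Matrix.fromBlocks
        ((M⁻¹).submatrix
          (fun i : Fin r => (⟨(i : ℕ), by have := i.isLt; omega⟩ : Fin n))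
          (fun j : Fin r => (⟨n - r + (j : ℕ), by have := j.isLt; omega⟩ : Fin n)))
        0
        ((M⁻¹).submatrix
          (fun i : Fin (n - r) => (⟨r + (i : ℕ), by have := i.isLt; omega⟩ : Fin n))
          (fun j : Fin r => (⟨n - r + (j : ℕ), by have := j.isLt; omega⟩ : Fin n)))
        1 := by
      ext i j
      rcases i with i | i <;> rcases j with j | j <;>
        · have hi := i.isLt
          have hj := j.isLt
          simp only [Matrix.submatrix_apply, hT, Matrix.fromBlocks_apply₁₁,
            Matrix.fromBlocks_apply₁₂, Matrix.fromBlocks_apply₂₁, Matrix.fromBlocks_apply₂₂,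
            e, Equiv.trans_apply, finSumFinEquiv_apply_left, finSumFinEquiv_apply_right,
            finCongr_apply, Fin.coe_cast, Fin.coe_castAdd, Fin.coe_natAdd,
            Matrix.zero_apply, Matrix.one_apply, Pi.zero_apply]
          first
          | (rw [dif_pos (by omega)]; congr 1 <;> exact Fin.ext (by simp))
          | (rw [dif_neg (by omega)]
             simp only [Fin.ext_iff, Fin.coe_cast, Fin.coe_castAdd, Fin.coe_natAdd]
             split_ifs <;> first | rfl | omega)
    rw [← Matrix.det_submatrix_equiv_self e, h1, Matrix.det_fromBlocks_zero₁₂,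
      Matrix.det_one, mul_one]
  · -- Part 2
    obtain ⟨m, rfl⟩ : ∃ m, n = m + 1 := ⟨n - 1, by omega⟩
    have hMT : ∀ i j : Fin (m + 1), (M * T) i j =
        if (j : ℕ) < r then (if (i : ℕ) = m + 1 - r + (j : ℕ) then 1 else 0) else M i j := by
      intro i j
      by_cases hj : (j : ℕ) < r
      · have : (M * T) i j = (M * M⁻¹) i ⟨m + 1 - r + (j : ℕ), by omega⟩ := by
          simp only [Matrix.mul_apply]
          refine Finset.sum_congr rfl fun x _ => ?_
          rw [hT, dif_pos hj]
        rw [this, hMinv]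
        simp [Matrix.one_apply, Fin.ext_iff, hj]
      · simp only [Matrix.mul_apply, hj, if_false]
        calc ∑ x, M i x * T x j = ∑ x, M i x * if x = j then 1 else 0 := by
              refine Finset.sum_congr rfl fun x _ => ?_
              rw [hT, dif_neg hj]
          _ = M i j := by simp [mul_ite, Finset.sum_ite_eq']
    let er : Fin (m + 1 - r) ⊕ Fin r ≃ Fin (m + 1) := finSumFinEquiv.trans (finCongr hn)
    let ec : Fin (m + 1 - r) ⊕ Fin r ≃ Fin (m + 1) :=
      (Equiv.sumComm _ _).trans (finSumFinEquiv.trans (finCongr hrnr))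
    have her_l : ∀ j : Fin (m + 1 - r), (er (Sum.inl j) : ℕ) = j := fun j => rfl
    have her_r : ∀ j : Fin r, (er (Sum.inr j) : ℕ) = m + 1 - r + j := fun j => rfl
    have hec_l : ∀ j : Fin (m + 1 - r), (ec (Sum.inl j) : ℕ) = r + j := fun j => rfl
    have hec_r : ∀ j : Fin r, (ec (Sum.inr j) : ℕ) = j := fun j => rfl
    have h2 : (M * T).submatrix er ec = Matrix.fromBlocks
        (M.submatrix
          (fun i : Fin (m + 1 - r) => (⟨(i : ℕ), by have := i.isLt; omega⟩ : Fin (m + 1)))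
          (fun j : Fin (m + 1 - r) => (⟨r + (j : ℕ), by have := j.isLt; omega⟩ : Fin (m + 1))))
        0
        (M.submatrix
          (fun i : Fin r => (⟨m + 1 - r + (i : ℕ), by have := i.isLt; omega⟩ : Fin (m + 1)))
          (fun j : Fin (m + 1 - r) => (⟨r + (j : ℕ), by have := j.isLt; omega⟩ : Fin (m + 1))))
        1 := by
      ext i j
      rcases i with i | i <;> rcases j with j | j <;>
        · have hi := i.isLt
          have hj := j.isLt
          simp only [Matrix.submatrix_apply, hMT, Matrix.fromBlocks_apply₁₁,
            Matrix.fromBlocks_apply₁₂, Matrix.fromBlocks_apply₂₁, Matrix.fromBlocks_apply₂₂,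
            hec_l, hec_r, her_l, her_r,
            Matrix.zero_apply, Matrix.one_apply, Pi.zero_apply]
          first
          | (rw [if_neg (by omega)]
             congr 1 <;> first | rfl |
               (apply Fin.ext
                first | exact her_l _ | exact her_r _ | exact hec_l _ | exact hec_r _))
          | (rw [if_pos (by omega)]
             try simp only [Fin.ext_iff]
             split_ifs <;> first | rfl | omega)
    let σ : Equiv.Perm (Fin (m + 1 - r) ⊕ Fin r) := ec.trans er.symm
    have key : ((M * T).submatrix er er).submatrix id ⇑σ = (M * T).submatrix er ec := by
      ext i j
      exact congrArg ((M * T) (er i)) (er.apply_symm_apply (ec j))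
    have hsign : Equiv.Perm.sign σ = (-1 : ℤˣ) ^ (m * r) := by
      have hconj : er.permCongr σ = (finRotate (m + 1)) ^ r := by
        apply Equiv.ext
        intro x
        obtain ⟨y, rfl⟩ := er.surjective x
        have h1 : (er.permCongr σ) (er y) = ec y := by
          simp [Equiv.permCongr_apply, σ]
        rw [h1, finRotate_pow_apply_aux]
        apply Fin.ext
        rcases y with j | j
        · have hj := j.isLt
          simp only [hec_l, her_l, Fin.add_def, Fin.val_natCast]
          rw [Nat.mod_eq_of_lt (by omega : r < m + 1), Nat.mod_eq_of_lt (by omega)]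
          omega
        · have hj := j.isLt
          simp only [hec_r, her_r, Fin.add_def, Fin.val_natCast]
          rw [Nat.mod_eq_of_lt (by omega : r < m + 1)]
          have h3 : m + 1 - r + (j : ℕ) + r = (m + 1) + (j : ℕ) := by omega
          rw [h3, Nat.add_mod_left, Nat.mod_eq_of_lt (by omega)]
      have := Equiv.Perm.sign_permCongr er σ
      rw [hconj] at this
      rw [← this, map_pow, sign_finRotate, ← pow_mul]
      simp only [Nat.add_sub_cancel]
    have hdet : (M * T).submatrix er ec = ((M * T).submatrix er er).submatrix id ⇑σ := key.symm
    have e1 : (Matrix.fromBlocks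
        (M.submatrix
          (fun i : Fin (m + 1 - r) => (⟨(i : ℕ), by have := i.isLt; omega⟩ : Fin (m + 1)))
          (fun j : Fin (m + 1 - r) => (⟨r + (j : ℕ), by have := j.isLt; omega⟩ : Fin (m + 1))))
        0
        (M.submatrix
          (fun i : Fin r => (⟨m + 1 - r + (i : ℕ), by have := i.isLt; omega⟩ : Fin (m + 1)))
          (fun j : Fin (m + 1 - r) => (⟨r + (j : ℕ), by have := j.isLt; omega⟩ : Fin (m + 1))))
        1).det = ((-1 : k) ^ (m * r)) * (M * T).det := by
      rw [← h2, hdet, Matrix.det_permute', Matrix.det_submatrix_equiv_self, hsign]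
      push_cast
      ring
    rw [Matrix.det_fromBlocks_zero₁₂, Matrix.det_one, mul_one] at e1
    have hpow : (-1 : k) ^ (r * (m + 1 + 1)) = (-1 : k) ^ (m * r) := by
      have h : r * (m + 1 + 1) = m * r + 2 * r := by ring
      rw [h, pow_add, pow_mul]
      norm_num
    rw [hpow, e1, ← mul_assoc]
    have h2' : (-1 : k) ^ (m * r) * (-1 : k) ^ (m * r) = 1 := by
      rw [← pow_add, ← two_mul, pow_mul]
      norm_num
    rw [h2', one_mul]
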